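/- arXiv:1509.01931 — 4 statements merged into one kernel-verified Lean document; each statement's English description precedes it below -/
import Mathlib

section
/- Let G be a complex r×t matrix and K a t×t positive semidefinite Hermitian matrix. Then det(I_t + 2·Gᴴ·G·K) ≤ 2^(min(t,r)) · det(I_t + Gᴴ·G·K). -/
open Matrix ComplexOrder

-- det(1 + c•M) for Hermitian M
lemma det_one_add_smul_herm {n : Type*} [Fintype n] [DecidableEq n]
    {M : Matrix n n ℂ} (hM : M.IsHermitian) (c : ℂ) :
    (1 + c • M).det = ∏ i, (1 + c * (hM.eigenvalues i : ℂ)) := by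
  set U : Matrix n n ℂ := (hM.eigenvectorUnitary : Matrix n n ℂ)
  have hU : U * star U = 1 := (Matrix.mem_unitaryGroup_iff).mp hM.eigenvectorUnitary.2
  have hU' : star U * U = 1 := (Matrix.mem_unitaryGroup_iff').mp hM.eigenvectorUnitary.2
  have key : (1 : Matrix n n ℂ) + c • M
      = U * (Matrix.diagonal (fun i => 1 + c * (hM.eigenvalues i : ℂ))) * star U := by
    have hspec : M = U * Matrix.diagonal (RCLike.ofReal ∘ hM.eigenvalues) * star U := by
      exact hM.spectral_theorem
    have : (Matrix.diagonal (fun i => 1 + c * (hM.eigenvalues i : ℂ)))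
        = 1 + c • Matrix.diagonal (RCLike.ofReal ∘ hM.eigenvalues) := by
      ext i j
      by_cases hij : i = j <;>
        simp [Matrix.diagonal_apply, Matrix.one_apply, hij]
    rw [this, Matrix.mul_add, Matrix.add_mul, Matrix.mul_one, hU,
      Matrix.mul_smul, Matrix.smul_mul, ← hspec]
  rw [key, Matrix.det_mul, Matrix.det_mul, mul_comm, ← mul_assoc, ← Matrix.det_mul, hU']
  simp [Matrix.det_diagonal]

lemma core {n : Type*} [Fintype n] [DecidableEq n]
    {M : Matrix n n ℂ} (hM : M.PosSemidef) :
    (1 + (2 : ℂ) • M).det ≤ (2 : ℂ) ^ (Fintype.card n) * (1 + M).det := by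
  have h2 := det_one_add_smul_herm hM.1 2
  have h1 := det_one_add_smul_herm hM.1 1
  rw [one_smul] at h1
  rw [h1, h2]
  have hl : (∏ i, (1 + 2 * (hM.1.eigenvalues i : ℂ)))
      = ((∏ i, (1 + 2 * hM.1.eigenvalues i) : ℝ) : ℂ) := by push_cast; rfl
  have hr : ((2 : ℂ) ^ (Fintype.card n) * ∏ i, (1 + 1 * (hM.1.eigenvalues i : ℂ)))
      = (((2 : ℝ) ^ (Fintype.card n) * ∏ i, (1 + hM.1.eigenvalues i) : ℝ) : ℂ) := by
    push_cast; ring_nf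
  rw [hl, hr, Complex.real_le_real]
  have hnn := hM.eigenvalues_nonneg
  calc ∏ i, (1 + 2 * hM.1.eigenvalues i)
      ≤ ∏ i, 2 * (1 + hM.1.eigenvalues i) := by
        apply Finset.prod_le_prod
        · intro i _; nlinarith [hnn i]
        · intro i _; nlinarith [hnn i]
    _ = (2 : ℝ) ^ (Fintype.card n) * ∏ i, (1 + hM.1.eigenvalues i) := by
        rw [Finset.prod_mul_distrib, Finset.prod_const]
        simp [Finset.card_univ]

theorem stmt_9 {r t : ℕ} (G : Matrix (Fin r) (Fin t) ℂ)
    (K : Matrix (Fin t) (Fin t) ℂ) (hK : K.PosSemidef) :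
    (1 + (2 : ℂ) • (Gᴴ * G * K)).det ≤ (2 : ℂ) ^ (min t r) * (1 + Gᴴ * G * K).det := by
  rcases le_total t r with h | h
  · -- min = t, work in t×t with B*Gᴴ*G*Bᴴ where K = Bᴴ*B
    rw [min_eq_left h]
    obtain ⟨B, rfl⟩ : ∃ B : Matrix (Fin t) (Fin t) ℂ, K = Bᴴ * B := by
      open scoped MatrixOrder in
      obtain ⟨B, hB⟩ := CStarAlgebra.nonneg_iff_eq_star_mul_self.mp hK.nonneg
      exact ⟨B, hB⟩
    have key : ∀ c : ℂ, (1 + c • (Gᴴ * G * (Bᴴ * B))).det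
        = (1 + c • (B * (Gᴴ * G) * Bᴴ)).det := by
      intro c
      have e1 : c • (Gᴴ * G * (Bᴴ * B)) = (c • (Gᴴ * G * Bᴴ)) * B := by
        simp only [Matrix.smul_mul, Matrix.mul_assoc]
      have e2 : B * (c • (Gᴴ * G * Bᴴ)) = c • (B * (Gᴴ * G) * Bᴴ) := by
        rw [Matrix.mul_smul, ← Matrix.mul_assoc, ← Matrix.mul_assoc]
      rw [e1, Matrix.det_one_add_mul_comm, e2]
    rw [key 2, show (1 + Gᴴ * G * (Bᴴ * B)) = 1 + (1:ℂ) • (Gᴴ * G * (Bᴴ * B)) by rw [one_smul],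
      key 1, one_smul]
    have hPSD : (B * (Gᴴ * G) * Bᴴ).PosSemidef :=
      (Matrix.posSemidef_conjTranspose_mul_self G).mul_mul_conjTranspose_same B
    simpa using core hPSD
  · -- min = r, work in r×r with G*K*Gᴴ
    rw [min_eq_right h]
    have key : ∀ c : ℂ, (1 + c • (Gᴴ * G * K)).det = (1 + c • (G * K * Gᴴ)).det := by
      intro c
      have e1 : c • (Gᴴ * G * K) = Gᴴ * (c • (G * K)) := by
        rw [Matrix.mul_smul, Matrix.mul_assoc]
      have e2 : (c • (G * K)) * Gᴴ = c • (G * K * Gᴴ) := by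
        rw [Matrix.smul_mul]
      rw [e1, Matrix.det_one_add_mul_comm, e2]
    rw [key 2, show (1 + Gᴴ * G * K) = 1 + (1:ℂ) • (Gᴴ * G * K) by rw [one_smul],
      key 1, one_smul]
    have hPSD : (G * K * Gᴴ).PosSemidef := hK.mul_mul_conjTranspose_same G
    simpa using core hPSD
end

section
/- Let A and B be t×t positive semidefinite Hermitian complex matrices and K a t×t positive semidefinite Hermitian matrix. Then det(I_t + A·K) · det(I_t + B·K) ≥ det(I_t + (A+B)·K). -/
open Matrix ComplexOrder
open scoped MatrixOrder

variable {n : Type*} [Fintype n] [DecidableEq n]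

/-- For a PSD matrix `E`, `det (1 + E) ≥ 1`. -/
private lemma aux_one_le_det {E : Matrix n n ℂ} (hE : E.PosSemidef) :
    (1 : ℂ) ≤ (1 + E).det := by
  have hspec := hE.isHermitian.spectral_theorem
  set U : Matrix n n ℂ := (hE.isHermitian.eigenvectorUnitary : Matrix n n ℂ) with hUdef
  have hU : U * star U = 1 := Matrix.mem_unitaryGroup_iff.mp hE.isHermitian.eigenvectorUnitary.2
  have hkey : (1 : Matrix n n ℂ) + E
      = U * (1 + diagonal (RCLike.ofReal ∘ hE.isHermitian.eigenvalues)) * star U := by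
    rw [Matrix.mul_add, Matrix.add_mul, Matrix.mul_one, hU]
    exact congrArg _ hspec
  have hdetU : U.det * (star U).det = 1 := by
    rw [← Matrix.det_mul, hU, Matrix.det_one]
  have hdiag : ((1 : Matrix n n ℂ) + diagonal (RCLike.ofReal ∘ hE.isHermitian.eigenvalues)).det
      = ∏ i, ((1 + hE.isHermitian.eigenvalues i : ℝ) : ℂ) := by
    rw [← Matrix.diagonal_one, Matrix.diagonal_add, Matrix.det_diagonal]
    simp [RCLike.ofReal]
  have hprod : (1 : ℂ) ≤ ∏ i, ((1 + hE.isHermitian.eigenvalues i : ℝ) : ℂ) := by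
    rw [← Complex.ofReal_prod, ← Complex.ofReal_one, Complex.real_le_real]
    calc (1:ℝ) = ∏ _i : n, 1 := by simp
      _ ≤ ∏ i, (1 + hE.isHermitian.eigenvalues i) :=
          Finset.prod_le_prod (fun i _ => zero_le_one) fun i _ => by
            linarith [hE.eigenvalues_nonneg i]
  calc (1 : ℂ) ≤ ∏ i, ((1 + hE.isHermitian.eigenvalues i : ℝ) : ℂ) := hprod
    _ = (1 + E).det := by
        rw [hkey, Matrix.det_mul, Matrix.det_mul, mul_comm U.det, mul_assoc, hdetU,
          mul_one, hdiag]

/-- Determinant monotonicity: for `X` positive definite and `D` PSD, `det X ≤ det (X + D)`. -/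
private lemma aux_det_le_det_add {X D : Matrix n n ℂ} (hX : X.PosDef) (hD : D.PosSemidef) :
    X.det ≤ (X + D).det := by
  set R := CFC.sqrt X with hRdef
  have hRR : R * R = X := CFC.sqrt_mul_sqrt_self X hX.posSemidef.nonneg
  have hRh : Rᴴ = R := (CFC.sqrt_nonneg X).posSemidef.isHermitian
  have hdetX : R.det * R.det = X.det := by rw [← Matrix.det_mul, hRR]
  have hRu : IsUnit R.det := by
    have h0 : X.det ≠ 0 := hX.det_pos.ne'
    refine isUnit_iff_ne_zero.mpr fun h => h0 ?_
    rw [← hdetX, h, mul_zero]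
  have hRinvh : (R⁻¹)ᴴ = R⁻¹ := by
    rw [Matrix.conjTranspose_nonsing_inv, hRh]
  have hE : (R⁻¹ * D * R⁻¹).PosSemidef := by
    have := hD.conjTranspose_mul_mul_same R⁻¹
    rwa [hRinvh] at this
  have hXD : X + D = R * (1 + R⁻¹ * D * R⁻¹) * R := by
    rw [Matrix.mul_add, Matrix.mul_one, Matrix.add_mul, hRR]
    congr 1
    symm
    calc R * (R⁻¹ * D * R⁻¹) * R = (R * R⁻¹) * D * (R⁻¹ * R) := by
          simp only [Matrix.mul_assoc]
      _ = D := by rw [Matrix.mul_nonsing_inv _ hRu, Matrix.nonsing_inv_mul _ hRu,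
          Matrix.one_mul, Matrix.mul_one]
  have h1 : (1 : ℂ) ≤ (1 + R⁻¹ * D * R⁻¹).det := aux_one_le_det hE
  calc X.det = X.det * 1 := (mul_one _).symm
    _ ≤ X.det * (1 + R⁻¹ * D * R⁻¹).det :=
        mul_le_mul_of_nonneg_left h1 hX.det_pos.le
    _ = (X + D).det := by
        rw [hXD, Matrix.det_mul, Matrix.det_mul, ← hdetX]; ring

/-- Key lemma: for PSD Hermitian `M`, `N`, `det (1 + M + N) ≤ det (1 + M) * det (1 + N)`. -/
private lemma aux_key {M N : Matrix n n ℂ} (hM : M.PosSemidef) (hN : N.PosSemidef) :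
    (1 + M + N).det ≤ (1 + M).det * (1 + N).det := by
  set P : Matrix n n ℂ := 1 + M with hPdef
  have hP : P.PosDef := Matrix.PosDef.add_posSemidef Matrix.PosDef.one hM
  have hPu : IsUnit P.det := hP.det_pos.ne'.isUnit
  have hPh : Pᴴ = P := hP.isHermitian
  have hPinvh : (P⁻¹)ᴴ = P⁻¹ := hP.isHermitian.inv
  set T := CFC.sqrt N with hTdef
  have hTT : T * T = N := CFC.sqrt_mul_sqrt_self N hN.nonneg
  have hTh : Tᴴ = T := (CFC.sqrt_nonneg N).posSemidef.isHermitian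
  -- 1 - P⁻¹ is PSD
  have hMM : (M + M * M).PosSemidef := by
    have h2 : (M ^ 2).PosSemidef := hM.pow 2
    rw [pow_two] at h2
    exact hM.add h2
  have hone_sub_eq : (1 : Matrix n n ℂ) - P⁻¹ = (P⁻¹)ᴴ * (M + M * M) * P⁻¹ := by
    rw [hPinvh]
    have hMP : M + M * M = M * P := by rw [hPdef, Matrix.mul_add, Matrix.mul_one]
    rw [hMP]
    symm
    calc P⁻¹ * (M * P) * P⁻¹ = P⁻¹ * M * (P * P⁻¹) := by simp only [Matrix.mul_assoc]
      _ = P⁻¹ * M := by rw [Matrix.mul_nonsing_inv _ hPu, Matrix.mul_one]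
      _ = P⁻¹ * (P - 1) := by rw [hPdef]; congr 1; abel
      _ = 1 - P⁻¹ := by rw [Matrix.mul_sub, Matrix.nonsing_inv_mul _ hPu, Matrix.mul_one]
  have hone_sub : ((1 : Matrix n n ℂ) - P⁻¹).PosSemidef := by
    rw [hone_sub_eq]; exact hMM.conjTranspose_mul_mul_same _
  -- G and D
  have hG : (T * P⁻¹ * T).PosSemidef := by
    have := hP.inv.posSemidef.conjTranspose_mul_mul_same T
    rwa [hTh] at this
  have hD : (T * (1 - P⁻¹) * T).PosSemidef := by
    have := hone_sub.conjTranspose_mul_mul_same T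
    rwa [hTh] at this
  have hGD : T * P⁻¹ * T + T * (1 - P⁻¹) * T = N := by
    rw [← hTT]; noncomm_ring
  -- det (1 + M + N) = det P * det (1 + G)
  have h1 : (1 + M + N).det = P.det * (1 + T * P⁻¹ * T).det := by
    have e1 : (1 : Matrix n n ℂ) + M + N = P * (1 + P⁻¹ * T * T) := by
      rw [Matrix.mul_add, Matrix.mul_one]
      rw [show P * (P⁻¹ * T * T) = (P * P⁻¹) * (T * T) by simp only [Matrix.mul_assoc],
        Matrix.mul_nonsing_inv _ hPu, Matrix.one_mul, hTT, hPdef]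
    rw [e1, Matrix.det_mul]
    congr 1
    calc (1 + P⁻¹ * T * T).det = (1 + (P⁻¹ * T) * T).det := by rw [Matrix.mul_assoc]
      _ = (1 + T * (P⁻¹ * T)).det := Matrix.det_one_add_mul_comm _ _
      _ = (1 + T * P⁻¹ * T).det := by rw [Matrix.mul_assoc]
  -- det (1 + N) = det ((1 + G) + D)
  have h2 : (1 : Matrix n n ℂ) + N = (1 + T * P⁻¹ * T) + T * (1 - P⁻¹) * T := by
    rw [add_assoc, hGD]
  have hGpd : ((1 : Matrix n n ℂ) + T * P⁻¹ * T).PosDef :=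
    Matrix.PosDef.add_posSemidef Matrix.PosDef.one hG
  have h3 : (1 + T * P⁻¹ * T).det ≤ ((1 + T * P⁻¹ * T) + T * (1 - P⁻¹) * T).det :=
    aux_det_le_det_add hGpd hD
  calc (1 + M + N).det = P.det * (1 + T * P⁻¹ * T).det := h1
    _ ≤ P.det * ((1 + T * P⁻¹ * T) + T * (1 - P⁻¹) * T).det :=
        mul_le_mul_of_nonneg_left h3 hP.det_pos.le
    _ = (1 + M).det * (1 + N).det := by rw [h2, hPdef]

theorem stmt_11 {t : ℕ} (A B K : Matrix (Fin t) (Fin t) ℂ)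
    (hA : A.PosSemidef) (hB : B.PosSemidef) (hK : K.PosSemidef) :
    (1 + (A + B) * K).det ≤ (1 + A * K).det * (1 + B * K).det := by
  set S := CFC.sqrt K with hSdef
  have hSS : S * S = K := CFC.sqrt_mul_sqrt_self K hK.nonneg
  have hSh : Sᴴ = S := (CFC.sqrt_nonneg K).posSemidef.isHermitian
  have hdet : ∀ X : Matrix (Fin t) (Fin t) ℂ, (1 + X * K).det = (1 + S * X * S).det := by
    intro X
    calc (1 + X * K).det = (1 + (X * S) * S).det := by
          rw [← hSS, Matrix.mul_assoc]
      _ = (1 + S * (X * S)).det := Matrix.det_one_add_mul_comm _ _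
      _ = (1 + S * X * S).det := by rw [Matrix.mul_assoc]
  have hM : (S * A * S).PosSemidef := by
    have := hA.conjTranspose_mul_mul_same S; rwa [hSh] at this
  have hN : (S * B * S).PosSemidef := by
    have := hB.conjTranspose_mul_mul_same S; rwa [hSh] at this
  have hsplit : S * (A + B) * S = S * A * S + S * B * S := by
    rw [Matrix.mul_add, Matrix.add_mul]
  rw [hdet (A + B), hdet A, hdet B, hsplit, ← add_assoc]
  exact aux_key hM hN
end

section
/- Let σ > 0, let A and B be t×t positive semidefinite Hermitian complex matrices with rank(A) ≤ r2 and rank(B) ≤ r3, and let K be a t×t positive semidefinite Hermitian matrix. Then det(I_t + ((1/(1+σ²))·A + B)·K) ≥ (1+σ²)^(−min(t, r2+r3)) · det(I_t + (A+B)·K). -/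
open Matrix ComplexOrder
open scoped MatrixOrder

section Aux

variable {n : Type*} [Fintype n] [DecidableEq n]

lemma aux_smul_psd {M : Matrix n n ℂ} (hM : M.PosSemidef) {r : ℝ} (hr : 0 ≤ r) :
    ((r : ℂ) • M).PosSemidef := by
  refine ⟨?_, fun x => ?_⟩
  · have h1 : ((r : ℂ) • M)ᴴ = star (r : ℂ) • Mᴴ := conjTranspose_smul _ _
    rw [Matrix.IsHermitian, h1, hM.1.eq, Complex.star_def, Complex.conj_ofReal]
  · exact (hM.smul (by exact_mod_cast hr : (0 : ℂ) ≤ (r : ℂ))).2 x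

lemma aux_det_spec {M : Matrix n n ℂ} (hM : M.IsHermitian) (c : ℝ) :
    (1 + (c : ℂ) • M).det = ∏ i, (((1 + c * hM.eigenvalues i : ℝ)) : ℂ) := by
  set U : Matrix n n ℂ := (hM.eigenvectorUnitary : Matrix n n ℂ)
  have hU : U * star U = 1 := (Matrix.mem_unitaryGroup_iff).mp hM.eigenvectorUnitary.2
  have hU' : star U * U = 1 := (Matrix.mem_unitaryGroup_iff').mp hM.eigenvectorUnitary.2
  set D : Matrix n n ℂ := diagonal (RCLike.ofReal ∘ hM.eigenvalues)
  have key : 1 + (c : ℂ) • M = U * (1 + (c : ℂ) • D) * star U := by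
    have hs : M = U * D * star U :=
      hM.spectral_theorem.trans (Unitary.conjStarAlgAut_apply _ _)
    rw [mul_add, mul_one, add_mul, hU, Matrix.mul_smul, Matrix.smul_mul, ← hs]
  rw [key, det_mul, det_mul]
  have h2 : U.det * (1 + (c : ℂ) • D).det * (star U).det
      = (1 + (c : ℂ) • D).det * ((star U).det * U.det) := by ring
  rw [h2, ← det_mul, hU', det_one, mul_one]
  have h3 : (1 : Matrix n n ℂ) + (c : ℂ) • D
      = diagonal (fun i => 1 + (c : ℂ) * (hM.eigenvalues i : ℂ)) := by
    rw [← diagonal_one, ← diagonal_smul, ← diagonal_add]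
    rfl
  rw [h3, det_diagonal]
  exact Finset.prod_congr rfl fun i _ => by push_cast; ring

lemma aux_one_le_det_one_add {W : Matrix n n ℂ} (hW : W.PosSemidef) :
    (1 : ℂ) ≤ (1 + W).det := by
  have h := aux_det_spec hW.1 1
  rw [Complex.ofReal_one, one_smul] at h
  rw [h]
  have : ∏ i, (((1 + 1 * hW.1.eigenvalues i : ℝ)) : ℂ)
      = (((∏ i, (1 + 1 * hW.1.eigenvalues i) : ℝ)) : ℂ) := by push_cast; rfl
  rw [this]
  rw [show (1 : ℂ) = ((1 : ℝ) : ℂ) by norm_num, Complex.real_le_real]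
  calc (1 : ℝ) = ∏ _i : n, (1 : ℝ) := by simp
    _ ≤ ∏ i, (1 + 1 * hW.1.eigenvalues i) := by
        refine Finset.prod_le_prod (fun i _ => zero_le_one) (fun i _ => ?_)
        have := hW.eigenvalues_nonneg i
        linarith

lemma aux_det_mono {P N : Matrix n n ℂ} (hP : P.PosDef) (hN : N.PosSemidef) :
    P.det ≤ (P + N).det := by
  set T := CFC.sqrt P with hTdef
  have hT : T * T = P := CFC.sqrt_mul_sqrt_self P hP.posSemidef.nonneg
  have hTpsd : T.PosSemidef := (CFC.sqrt_nonneg P).posSemidef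
  have hdet : T.det ≠ 0 := by
    intro h
    exact hP.det_pos.ne' (by rw [← hT, det_mul, h, mul_zero])
  have hu : IsUnit T.det := isUnit_iff_ne_zero.mpr hdet
  have hTinvH : T⁻¹.IsHermitian := hTpsd.1.inv
  have hW : (T⁻¹ * N * T⁻¹).PosSemidef := by
    have := hN.conjTranspose_mul_mul_same T⁻¹
    rwa [hTinvH.eq] at this
  have key : P + N = T * (1 + T⁻¹ * N * T⁻¹) * T := by
    rw [mul_add, mul_one, add_mul, hT]
    congr 1
    have h5 : T * (T⁻¹ * N * T⁻¹) * T = T * T⁻¹ * N * (T⁻¹ * T) := by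
      simp only [Matrix.mul_assoc]
    rw [h5, Matrix.mul_nonsing_inv _ hu, Matrix.nonsing_inv_mul _ hu, one_mul, mul_one]
  have hPdet : P.det = T.det * T.det := by rw [← hT, det_mul]
  rw [key, det_mul, det_mul]
  have harr : T.det * (1 + T⁻¹ * N * T⁻¹).det * T.det
      = (1 + T⁻¹ * N * T⁻¹).det * P.det := by rw [hPdet]; ring
  rw [harr, hPdet]
  have h1le := aux_one_le_det_one_add hW
  have hPnonneg : (0 : ℂ) ≤ T.det * T.det := by
    rw [← hPdet]; exact hP.det_pos.le
  exact le_mul_of_one_le_left hPnonneg h1le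

lemma aux_rank_add {m : Type*} [Fintype m] (A B : Matrix n m ℂ) :
    (A + B).rank ≤ A.rank + B.rank := by
  simp only [Matrix.rank]
  rw [Matrix.mulVecLin_add]
  have hle : LinearMap.range (A.mulVecLin + B.mulVecLin)
      ≤ LinearMap.range A.mulVecLin ⊔ LinearMap.range B.mulVecLin := by
    rintro x ⟨y, rfl⟩
    exact Submodule.add_mem_sup ⟨y, rfl⟩ ⟨y, rfl⟩
  exact (Submodule.finrank_mono hle).trans
    (Submodule.finrank_add_le_finrank_add_finrank _ _)

lemma aux_prod {lam : n → ℝ} (c : ℝ) (hc0 : 0 < c) (hc1 : c ≤ 1)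
    (hlam : ∀ i, 0 ≤ lam i) (m : ℕ)
    (hcard : (Finset.univ.filter (fun i => lam i ≠ 0)).card ≤ m) :
    c ^ m * ∏ i, (1 + lam i) ≤ ∏ i, (1 + c * lam i) := by
  have hstep1 : c ^ m ≤ c ^ (Finset.univ.filter (fun i => lam i ≠ 0)).card :=
    pow_le_pow_of_le_one hc0.le hc1 hcard
  have hprodpos : (0 : ℝ) ≤ ∏ i, (1 + lam i) :=
    Finset.prod_nonneg fun i _ => by have := hlam i; linarith
  have hstep2 : c ^ m * ∏ i, (1 + lam i)
      ≤ c ^ (Finset.univ.filter (fun i => lam i ≠ 0)).card * ∏ i, (1 + lam i) :=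
    mul_le_mul_of_nonneg_right hstep1 hprodpos
  refine hstep2.trans ?_
  have heq : c ^ (Finset.univ.filter (fun i => lam i ≠ 0)).card * ∏ i, (1 + lam i)
      = ∏ i, ((if lam i = 0 then 1 else c) * (1 + lam i)) := by
    rw [Finset.prod_mul_distrib]
    congr 1
    rw [Finset.prod_ite, Finset.prod_const_one, one_mul, Finset.prod_const]
  rw [heq]
  refine Finset.prod_le_prod (fun i _ => ?_) (fun i _ => ?_)
  · have := hlam i
    split <;> [positivity; positivity]
  · by_cases h : lam i = 0
    · simp [h]
    · simp only [h, if_false]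
      have := hlam i
      nlinarith

end Aux

theorem stmt_13 {t : ℕ} (r2 r3 : ℕ) (σ : ℝ) (hσ : 0 < σ)
    (A B K : Matrix (Fin t) (Fin t) ℂ)
    (hA : A.PosSemidef) (hB : B.PosSemidef) (hK : K.PosSemidef)
    (hrA : A.rank ≤ r2) (hrB : B.rank ≤ r3) :
    ((1 + (σ : ℂ) ^ 2)⁻¹) ^ (min t (r2 + r3)) * (1 + (A + B) * K).det
      ≤ (1 + ((1 / (1 + (σ : ℂ) ^ 2)) • A + B) * K).det := by
  set c : ℝ := (1 + σ ^ 2)⁻¹ with hcdef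
  have hden : (0 : ℝ) < 1 + σ ^ 2 := by positivity
  have hc0 : 0 < c := by positivity
  have hc1 : c ≤ 1 := by
    rw [hcdef]
    rw [inv_le_one_iff₀]
    right; nlinarith
  have hccast : (1 / (1 + (σ : ℂ) ^ 2)) = (c : ℂ) := by
    rw [hcdef]; push_cast; rw [one_div]
  -- square root of K
  set S : Matrix (Fin t) (Fin t) ℂ := CFC.sqrt K with hSdef
  have hSpsd : S.PosSemidef := (CFC.sqrt_nonneg K).posSemidef
  have hSS : S * S = K := CFC.sqrt_mul_sqrt_self K hK.nonneg
  set M : Matrix (Fin t) (Fin t) ℂ := S * (A + B) * S with hMdef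
  have hMpsd : M.PosSemidef := by
    have := (hA.add hB).conjTranspose_mul_mul_same S
    rwa [hSpsd.1.eq] at this
  set NB : Matrix (Fin t) (Fin t) ℂ := S * B * S with hNBdef
  have hNBpsd : NB.PosSemidef := by
    have := hB.conjTranspose_mul_mul_same S
    rwa [hSpsd.1.eq] at this
  have hNpsd : (((1 - c : ℝ) : ℂ) • NB).PosSemidef :=
    aux_smul_psd hNBpsd (by linarith)
  -- determinant identities via Weinstein–Aronszajn
  have hdetswap : ∀ X : Matrix (Fin t) (Fin t) ℂ,
      (1 + X * K).det = (1 + S * X * S).det := by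
    intro X
    rw [← hSS, ← Matrix.mul_assoc, det_one_add_mul_comm, Matrix.mul_assoc]
  -- rank bound
  have hrank : (Finset.univ.filter (fun i => hMpsd.1.eigenvalues i ≠ 0)).card
      ≤ min t (r2 + r3) := by
    have h1 : (Finset.univ.filter (fun i => hMpsd.1.eigenvalues i ≠ 0)).card = M.rank := by
      rw [hMpsd.1.rank_eq_card_non_zero_eigs, Fintype.card_subtype]
    rw [h1]
    refine le_min ?_ ?_
    · exact M.rank_le_width
    · calc M.rank ≤ ((A + B) * S).rank := by
            rw [hMdef, Matrix.mul_assoc]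
            exact Matrix.rank_mul_le_right _ _
        _ ≤ (A + B).rank := Matrix.rank_mul_le_left _ _
        _ ≤ A.rank + B.rank := aux_rank_add _ _
        _ ≤ r2 + r3 := add_le_add hrA hrB
  -- eigenvalue products
  set lam : Fin t → ℝ := hMpsd.1.eigenvalues with hlamdef
  have hlamnn : ∀ i, 0 ≤ lam i := hMpsd.eigenvalues_nonneg
  have hdetcM : (1 + (c : ℂ) • M).det = ∏ i, (((1 + c * lam i : ℝ)) : ℂ) :=
    aux_det_spec hMpsd.1 c
  have hdetM : (1 + M).det = ∏ i, (((1 + lam i : ℝ)) : ℂ) := by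
    have := aux_det_spec hMpsd.1 1
    rw [Complex.ofReal_one, one_smul] at this
    rw [this]
    exact Finset.prod_congr rfl fun i _ => by norm_num; rfl
  -- decomposition
  have hdecomp : S * ((c : ℂ) • A + B) * S = (c : ℂ) • M + ((1 - c : ℝ) : ℂ) • NB := by
    rw [hMdef, hNBdef]
    push_cast
    simp only [mul_add, add_mul, Matrix.mul_smul, Matrix.smul_mul, smul_add]
    module
  -- monotonicity step
  have hPDone : ((1 : Matrix (Fin t) (Fin t) ℂ) + (c : ℂ) • M).PosDef :=
    Matrix.PosDef.add_posSemidef Matrix.PosDef.one (aux_smul_psd hMpsd hc0.le)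
  have hmono : (1 + (c : ℂ) • M).det ≤ (1 + S * ((c : ℂ) • A + B) * S).det := by
    rw [hdecomp, ← add_assoc]
    exact aux_det_mono hPDone hNpsd
  -- real product inequality
  have hreal : c ^ (min t (r2 + r3)) * ∏ i, (1 + lam i) ≤ ∏ i, (1 + c * lam i) :=
    aux_prod c hc0 hc1 hlamnn _ hrank
  -- assemble
  have hgoalL : ((1 + (σ : ℂ) ^ 2)⁻¹) ^ (min t (r2 + r3)) * (1 + (A + B) * K).det
      = (((c ^ (min t (r2 + r3)) * ∏ i, (1 + lam i) : ℝ)) : ℂ) := by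
    rw [hdetswap, ← hMdef, hdetM]
    have h1 : ((1 + (σ : ℂ) ^ 2)⁻¹) = (c : ℂ) := by rw [hcdef]; push_cast; ring
    rw [h1]
    push_cast
    ring
  have hmid : (((∏ i, (1 + c * lam i) : ℝ)) : ℂ) = (1 + (c : ℂ) • M).det := by
    rw [hdetcM]; push_cast; rfl
  rw [hgoalL, hdetswap, hccast]
  calc (((c ^ (min t (r2 + r3)) * ∏ i, (1 + lam i) : ℝ)) : ℂ)
      ≤ (((∏ i, (1 + c * lam i) : ℝ)) : ℂ) := Complex.real_le_real.mpr hreal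
    _ = (1 + (c : ℂ) • M).det := hmid
    _ ≤ (1 + S * ((c : ℂ) • A + B) * S).det := hmono
end

section
/- Let G be a complex r×t matrix, K a t×t positive semidefinite Hermitian matrix, and σ² > 0. Then det(I_t + Gᴴ·G·K·(I_t + Gᴴ·G·K)⁻¹) ≤ 2^(min(t,r)). -/
open Matrix ComplexOrder

lemma aux_det_one_add_smul {n : ℕ} {B : Matrix (Fin n) (Fin n) ℂ} (hB : B.IsHermitian) (c : ℝ) :
    (1 + (c : ℂ) • B).det = ((∏ i, (1 + c * hB.eigenvalues i) : ℝ) : ℂ) := by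
  set U := (hB.eigenvectorUnitary : Matrix (Fin n) (Fin n) ℂ) with hUdef
  have hU : U * star U = 1 := mem_unitaryGroup_iff.mp hB.eigenvectorUnitary.2
  have h1 : U * (1 + (c : ℂ) • diagonal (RCLike.ofReal ∘ hB.eigenvalues)) * star U
      = 1 + (c : ℂ) • B := by
    rw [Matrix.mul_add, Matrix.add_mul, Matrix.mul_one, hU, Matrix.mul_smul, Matrix.smul_mul,
      (show U * diagonal (RCLike.ofReal ∘ hB.eigenvalues) * star U = B from hB.spectral_theorem.symm)]
  rw [← h1, Matrix.det_mul_right_comm, hU, Matrix.one_mul]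
  have h2 : (1 : Matrix (Fin n) (Fin n) ℂ) + (c : ℂ) • diagonal (RCLike.ofReal ∘ hB.eigenvalues)
      = diagonal (fun i => (1 : ℂ) + c * hB.eigenvalues i) := by
    rw [← diagonal_one, ← diagonal_smul, ← diagonal_add]
    congr 1
  rw [h2, det_diagonal]
  push_cast
  rfl

theorem stmt_18 {r t : ℕ} (G : Matrix (Fin r) (Fin t) ℂ)
    (K : Matrix (Fin t) (Fin t) ℂ) (hK : K.PosSemidef)
    (σ2 : ℝ) (hσ2 : 0 < σ2) :
    (1 + Gᴴ * G * K * (1 + Gᴴ * G * K)⁻¹).det ≤ (2 : ℂ) ^ (min t r) := by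
  set S := (open scoped MatrixOrder in CFC.sqrt K) with hSdef
  have hSS : S * S = K := by open scoped MatrixOrder in exact CFC.sqrt_mul_sqrt_self K hK.nonneg
  have hSH : S.IsHermitian := by open scoped MatrixOrder in exact (CFC.sqrt_nonneg K).posSemidef.1
  set B := (G * S)ᴴ * (G * S) with hBdef
  have hB : B.PosSemidef := posSemidef_conjTranspose_mul_self _
  set lam := hB.1.eigenvalues with hlamdef
  have hlam : ∀ i, 0 ≤ lam i := hB.eigenvalues_nonneg
  set M := Gᴴ * G * K with hMdef
  -- key determinant identity
  have hdet : ∀ c : ℝ, (1 + (c : ℂ) • M).det = ((∏ i, (1 + c * lam i) : ℝ) : ℂ) := by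
    intro c
    have hMeq : (c : ℂ) • M = ((c : ℂ) • (Gᴴ * G * S)) * S := by
      simp only [hMdef, ← hSS, Matrix.smul_mul, Matrix.mul_assoc]
    have hBeq : S * ((c : ℂ) • (Gᴴ * G * S)) = (c : ℂ) • B := by
      simp only [Matrix.mul_smul, hBdef, conjTranspose_mul, hSH.eq, Matrix.mul_assoc]
    rw [hMeq, Matrix.det_one_add_mul_comm, hBeq, aux_det_one_add_smul hB.1 c]
  have h1 : (1 + M).det = ((∏ i, (1 + lam i) : ℝ) : ℂ) := by
    simpa using hdet 1
  have hP1pos : (0 : ℝ) < ∏ i, (1 + lam i) :=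
    Finset.prod_pos fun i _ => by linarith [hlam i]
  have hunit : IsUnit (1 + M).det := by
    rw [h1]
    simp only [isUnit_iff_ne_zero, ne_eq, Complex.ofReal_eq_zero]
    exact hP1pos.ne'
  have hinv : (1 + M) * (1 + M)⁻¹ = 1 := mul_nonsing_inv _ hunit
  have h2M : (((2 : ℝ) : ℂ)) • M = M + M := by norm_num [two_smul]
  have hcomb : 1 + M * (1 + M)⁻¹ = (1 + ((2 : ℝ) : ℂ) • M) * (1 + M)⁻¹ := by
    rw [h2M, ← add_assoc, Matrix.add_mul, hinv]
  calc (1 + Gᴴ * G * K * (1 + Gᴴ * G * K)⁻¹).det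
      = (1 + ((2 : ℝ) : ℂ) • M).det * ((1 + M).det)⁻¹ := by
        rw [← hMdef, hcomb, det_mul, det_nonsing_inv, Ring.inverse_eq_inv']
    _ = ((∏ i, (1 + 2 * lam i) : ℝ) : ℂ) * (((∏ i, (1 + lam i) : ℝ) : ℂ))⁻¹ := by
        rw [hdet 2, h1]
    _ ≤ (2 : ℂ) ^ (min t r) := by
        rw [← Complex.ofReal_inv, ← Complex.ofReal_mul]
        have h2 : ((2 : ℂ) ^ (min t r)) = (((2 : ℝ) ^ (min t r) : ℝ) : ℂ) := by push_cast; ring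
        rw [h2, Complex.real_le_real]
        -- now a real inequality
        rw [← div_eq_mul_inv, div_le_iff₀ hP1pos]
        have hcard : (Finset.univ.filter fun i => lam i ≠ 0).card ≤ min t r := by
          have hrank : B.rank = Fintype.card {i // lam i ≠ 0} :=
            hB.1.rank_eq_card_non_zero_eigs
          have hc : (Finset.univ.filter fun i => lam i ≠ 0).card
              = Fintype.card {i // lam i ≠ 0} := (Fintype.card_subtype _).symm
          have hr1 : B.rank = (G * S).rank := rank_conjTranspose_mul_self _
          have hr2 : (G * S).rank ≤ t := by
            simpa using rank_le_card_width (G * S)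
          have hr3 : (G * S).rank ≤ r := by
            simpa using rank_le_card_height (G * S)
          omega
        calc ∏ i, (1 + 2 * lam i)
            = ∏ i, ((1 + 2 * lam i) / (1 + lam i)) * (1 + lam i) := by
              congr 1; funext i; exact (div_mul_cancel₀ _ (by linarith [hlam i] : (0:ℝ) < 1 + lam i).ne').symm
          _ = (∏ i, (1 + 2 * lam i) / (1 + lam i)) * ∏ i, (1 + lam i) :=
              Finset.prod_mul_distrib
          _ ≤ (2 : ℝ) ^ (min t r) * ∏ i, (1 + lam i) := by
              apply mul_le_mul_of_nonneg_right _ hP1pos.le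
              calc ∏ i, (1 + 2 * lam i) / (1 + lam i)
                  = ∏ i ∈ Finset.univ.filter fun i => lam i ≠ 0,
                      (1 + 2 * lam i) / (1 + lam i) := by
                    rw [← Finset.prod_filter_mul_prod_filter_not Finset.univ
                      (fun i => lam i ≠ 0) (fun i => (1 + 2 * lam i) / (1 + lam i))]
                    have : ∏ i ∈ Finset.univ.filter fun i => ¬ lam i ≠ 0,
                        (1 + 2 * lam i) / (1 + lam i) = 1 := by
                      apply Finset.prod_eq_one
                      intro i hi
                      simp only [Finset.mem_filter, not_not] at hi
                      rw [hi.2]; norm_num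
                    rw [this, mul_one]
                _ ≤ (2 : ℝ) ^ (Finset.univ.filter fun i => lam i ≠ 0).card := by
                    rw [← Finset.prod_const]
                    apply Finset.prod_le_prod
                    · intro i _; exact div_nonneg (by linarith [hlam i]) (by linarith [hlam i])
                    · intro i _
                      rw [div_le_iff₀ (by linarith [hlam i])]
                      linarith [hlam i]
                _ ≤ (2 : ℝ) ^ (min t r) := pow_le_pow_right₀ one_le_two hcard
end
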